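/- arXiv:2408.04247 — 2 statements merged into one kernel-verified Lean document; each statement's English description precedes it below -/
import Mathlib

section
/- There is an absolute constant C > 0 such that for every N ∈ ℕ and all complex numbers a_1, …, a_N and b_1, …, b_N, one has | Σ_{m,n ≤ N, m ≠ n} a_m \overline{b_n} / (m − n) | ≤ C ( Σ_{n ≤ N} |a_n|² )^{1/2} ( Σ_{n ≤ N} |b_n|² )^{1/2}. -/
open Complex Finset MeasureTheory intervalIntegral Real

noncomputable def ee (r : ℤ) (x : ℝ) : ℂ := Complex.exp (2 * Real.pi * Complex.I * r * x)

lemma exp_c (r : ℤ) : Complex.exp (2 * Real.pi * Complex.I * r) = 1 := by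
  rw [show (2 * Real.pi * Complex.I * r : ℂ) = r * (2 * Real.pi * Complex.I) by ring]
  exact Complex.exp_int_mul_two_pi_mul_I r

lemma c_ne (r : ℤ) (hr : r ≠ 0) : (2 * Real.pi * Complex.I * r : ℂ) ≠ 0 := by
  simp [Real.pi_ne_zero, Complex.I_ne_zero, hr]

lemma ee_int (r : ℤ) : ∫ x in (0:ℝ)..1, ee r x = if r = 0 then 1 else 0 := by
  rcases eq_or_ne r 0 with h | h
  · simp [ee, h]
  · simp only [ee, h, if_false]
    rw [_root_.integral_exp_mul_complex (c_ne r h)]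
    simp [exp_c r]

lemma xee_int (r : ℤ) :
    ∫ x in (0:ℝ)..1, ((x : ℂ) - 1/2) * ee r x
      = if r = 0 then 0 else 1 / (2 * Real.pi * Complex.I * r) := by
  rcases eq_or_ne r 0 with h | h
  · simp only [ee, h, Int.cast_zero, mul_zero, zero_mul, Complex.exp_zero, mul_one, if_true]
    rw [intervalIntegral.integral_sub (Complex.continuous_ofReal.intervalIntegrable 0 1)
      (intervalIntegrable_const), intervalIntegral.integral_ofReal]
    simp
  · set c : ℂ := 2 * Real.pi * Complex.I * r with hcdef
    have hc : c ≠ 0 := c_ne r h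
    have D : ∀ x : ℝ, HasDerivAt
        (fun y : ℝ => (((y : ℂ) - 1/2) / c - 1 / c ^ 2) * Complex.exp (c * y))
        (((x : ℂ) - 1/2) * Complex.exp (c * x)) x := by
      intro x
      have hexp : HasDerivAt (fun y : ℝ => Complex.exp (c * y)) (c * Complex.exp (c * x)) x := by
        have h0 : HasDerivAt (fun y : ℝ => c * (y : ℂ)) c x := by
          simpa only [mul_one, id_eq] using ((hasDerivAt_id (x : ℂ)).const_mul c).comp_ofReal
        simpa [mul_comm, Function.comp_def] using (Complex.hasDerivAt_exp (c * (x:ℂ))).comp x h0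
      have hlin : HasDerivAt (fun y : ℝ => ((y : ℂ) - 1/2) / c - 1 / c ^ 2) (1 / c) x := by
        have h1 : HasDerivAt (fun y : ℝ => (y : ℂ)) 1 x := Complex.ofRealCLM.hasDerivAt
        have := ((h1.sub_const (1/2)).div_const c).sub_const (1 / c ^ 2)
        simpa [one_div] using this
      have : HasDerivAt (fun y : ℝ => (((y : ℂ) - 1/2) / c - 1 / c ^ 2) * Complex.exp (c * y)) _ x :=
        hlin.mul hexp
      convert this using 1
      field_simp
      ring
    have hint : IntervalIntegrable (fun x : ℝ => ((x:ℂ) - 1/2) * Complex.exp (c * x))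
        MeasureTheory.volume 0 1 :=
      (Continuous.mul (by continuity) (by continuity)).intervalIntegrable 0 1
    have : ∫ x in (0:ℝ)..1, ((x : ℂ) - 1/2) * ee r x
        = ∫ x in (0:ℝ)..1, ((x:ℂ) - 1/2) * Complex.exp (c * x) := by
      simp [ee, hcdef, mul_comm, mul_assoc, mul_left_comm]
    rw [this, intervalIntegral.integral_eq_sub_of_hasDerivAt (fun x _ => D x) hint]
    simp only [Complex.ofReal_one, Complex.ofReal_zero, mul_one, mul_zero, Complex.exp_zero]
    rw [show Complex.exp c = 1 from hcdef ▸ exp_c r, if_neg h]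
    field_simp
    ring

lemma ee_cont (r : ℤ) : Continuous (ee r) :=
  Complex.continuous_exp.comp (continuous_const.mul Complex.continuous_ofReal)

lemma ee_conj (r : ℤ) (x : ℝ) : (starRingEnd ℂ) (ee r x) = ee (-r) x := by
  rw [ee, ← Complex.exp_conj]
  simp only [map_mul, Complex.conj_I, Complex.conj_ofReal, map_ofNat, map_intCast, ee]
  push_cast
  ring_nf

lemma ee_mul (r s : ℤ) (x : ℝ) : ee r x * ee s x = ee (r + s) x := by
  rw [ee, ee, ee, ← Complex.exp_add]
  push_cast
  ring_nf

lemma expand_int (N : ℕ) (a b : ℕ → ℂ) (F : ℝ → ℂ) (hF : Continuous F) (w : ℤ → ℂ)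
    (h : ∀ r : ℤ, ∫ x in (0:ℝ)..1, F x * ee r x = w r) :
    ∫ x in (0:ℝ)..1, F x * ((∑ m ∈ Icc 1 N, a m * ee m x) *
        (starRingEnd ℂ) (∑ n ∈ Icc 1 N, b n * ee n x))
      = ∑ m ∈ Icc 1 N, ∑ n ∈ Icc 1 N, a m * (starRingEnd ℂ) (b n) * w ((m : ℤ) - n) := by
  have key : ∀ x : ℝ, F x * ((∑ m ∈ Icc 1 N, a m * ee m x) *
      (starRingEnd ℂ) (∑ n ∈ Icc 1 N, b n * ee n x))
      = ∑ p ∈ (Icc 1 N) ×ˢ (Icc 1 N),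
          a p.1 * (starRingEnd ℂ) (b p.2) * (F x * ee ((p.1 : ℤ) - p.2) x) := by
    intro x
    rw [map_sum, Finset.sum_mul_sum, Finset.mul_sum, Finset.sum_product]
    refine Finset.sum_congr rfl fun m _ => ?_
    rw [Finset.mul_sum]
    refine Finset.sum_congr rfl fun n _ => ?_
    rw [map_mul, ee_conj]
    have h2 : ee (m : ℤ) x * ee (-(n : ℤ)) x = ee ((m : ℤ) - n) x := by
      rw [ee_mul]; ring_nf
    rw [show a m * ee (m : ℤ) x * ((starRingEnd ℂ) (b n) * ee (-(n:ℤ)) x)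
        = a m * (starRingEnd ℂ) (b n) * (ee (m : ℤ) x * ee (-(n:ℤ)) x) by ring, h2]
    simp only []
    ring
  simp only [key]
  rw [intervalIntegral.integral_finset_sum (fun p _ =>
    (show Continuous fun x => a p.1 * (starRingEnd ℂ) (b p.2) * (F x * ee ((p.1 : ℤ) - p.2) x) from continuous_const.mul (hF.mul (ee_cont _))).intervalIntegrable 0 1)]
  rw [← Finset.sum_product']
  refine Finset.sum_congr rfl fun p _ => ?_
  rw [intervalIntegral.integral_const_mul, h]

lemma orth (N : ℕ) (a b : ℕ → ℂ) :
    ∫ x in (0:ℝ)..1, (1 : ℂ) * ((∑ m ∈ Icc 1 N, a m * ee m x) *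
        (starRingEnd ℂ) (∑ n ∈ Icc 1 N, b n * ee n x))
      = ∑ m ∈ Icc 1 N, a m * (starRingEnd ℂ) (b m) := by
  rw [expand_int N a b (fun _ => (1:ℂ)) continuous_const
      (fun r => if r = 0 then 1 else 0) (fun r => by simpa [one_mul] using ee_int r)]
  refine Finset.sum_congr rfl fun m hm => ?_
  rw [Finset.sum_eq_single_of_mem m hm (fun n _ hn => ?_)]
  · simp
  · have : ((m : ℤ) - n) ≠ 0 := by
      simpa [sub_eq_zero] using fun hc => hn (by exact_mod_cast hc.symm)
    simp [this]

lemma parseval (N : ℕ) (a : ℕ → ℂ) :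
    ∫ x in (0:ℝ)..1, ‖∑ m ∈ Icc 1 N, a m * ee m x‖ ^ 2 = ∑ m ∈ Icc 1 N, ‖a m‖ ^ 2 := by
  have h1 := orth N a a
  have hsq : ∀ z : ℂ, z * (starRingEnd ℂ) z = ((‖z‖ ^ 2 : ℝ) : ℂ) := fun z => by
    rw [Complex.mul_conj, Complex.normSq_eq_norm_sq]
  simp only [one_mul, hsq] at h1
  rw [intervalIntegral.integral_ofReal] at h1
  exact_mod_cast h1

lemma main_id (N : ℕ) (a b : ℕ → ℂ) :
    ∑ m ∈ Icc 1 N, ∑ n ∈ Icc 1 N,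
      (if m ≠ n then a m * (starRingEnd ℂ) (b n) / ((m : ℂ) - (n : ℂ)) else 0)
    = (2 * Real.pi * Complex.I) * ∫ x in (0:ℝ)..1, ((x : ℂ) - 1/2) *
        ((∑ m ∈ Icc 1 N, a m * ee m x) * (starRingEnd ℂ) (∑ n ∈ Icc 1 N, b n * ee n x)) := by
  rw [expand_int N a b (fun x => (x : ℂ) - 1/2)
      (by exact Complex.continuous_ofReal.sub continuous_const)
      (fun r => if r = 0 then 0 else 1 / (2 * Real.pi * Complex.I * r)) xee_int]
  rw [Finset.mul_sum]
  refine Finset.sum_congr rfl fun m _ => ?_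
  rw [Finset.mul_sum]
  refine Finset.sum_congr rfl fun n _ => ?_
  rcases eq_or_ne m n with h | h
  · simp [h]
  · have hint : ((m : ℤ) - n) ≠ 0 := by
      simpa [sub_eq_zero] using fun hc => h (by exact_mod_cast hc)
    have hc : ((m : ℂ) - n) ≠ 0 := by
      intro hc; apply hint; exact_mod_cast (by push_cast at hc ⊢; exact_mod_cast hc : ((m:ℤ):ℂ) - n = 0)
    have h2 : (2 * Real.pi * Complex.I : ℂ) ≠ 0 := by
      simp [Real.pi_ne_zero, Complex.I_ne_zero]
    rw [if_pos h, if_neg hint]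
    have hcast : (((m : ℤ) - n : ℤ) : ℂ) = (m : ℂ) - n := by push_cast; ring
    rw [hcast]
    field_simp

/-- **Hilbert's inequality** (Proposition 2.2 of the paper, first form). There is an absolute
constant `C > 0` such that for all `N ∈ ℕ` and complex numbers `a₁, …, a_N`, `b₁, …, b_N`,
`|Σ_{m,n ≤ N, m ≠ n} a_m conj(b_n)/(m - n)|
  ≤ C (Σ_{n ≤ N} |a_n|²)^{1/2} (Σ_{n ≤ N} |b_n|²)^{1/2}`. -/
theorem hilbert_inequality :
    ∃ C : ℝ, 0 < C ∧ ∀ (N : ℕ) (a b : ℕ → ℂ),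
      ‖∑ m ∈ Finset.Icc 1 N, ∑ n ∈ Finset.Icc 1 N,
          if m ≠ n then a m * (starRingEnd ℂ) (b n) / ((m : ℂ) - (n : ℂ)) else 0‖ ≤
        C * (∑ n ∈ Finset.Icc 1 N, ‖a n‖ ^ 2) ^ ((1 : ℝ) / 2) *
          (∑ n ∈ Finset.Icc 1 N, ‖b n‖ ^ 2) ^ ((1 : ℝ) / 2) := by
  refine ⟨Real.pi, Real.pi_pos, fun N a b => ?_⟩
  have hA0 : 0 ≤ ∑ n ∈ Icc 1 N, ‖a n‖ ^ 2 := Finset.sum_nonneg fun n _ => sq_nonneg _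
  have hB0 : 0 ≤ ∑ n ∈ Icc 1 N, ‖b n‖ ^ 2 := Finset.sum_nonneg fun n _ => sq_nonneg _
  have coefzero : ∀ (c : ℕ → ℂ), (∑ n ∈ Icc 1 N, ‖c n‖ ^ 2) = 0 →
      ∀ m ∈ Icc 1 N, c m = 0 := by
    intro c h0 m hm
    have := (Finset.sum_eq_zero_iff_of_nonneg (fun n _ => sq_nonneg ‖c n‖)).mp h0 m hm
    simpa [pow_eq_zero_iff] using this
  rcases eq_or_lt_of_le hA0 with h | hApos
  · have hz : (∑ m ∈ Icc 1 N, ∑ n ∈ Icc 1 N,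
        if m ≠ n then a m * (starRingEnd ℂ) (b n) / ((m : ℂ) - (n : ℂ)) else 0) = 0 := by
      refine Finset.sum_eq_zero fun m hm => Finset.sum_eq_zero fun n _ => ?_
      rw [coefzero a h.symm m hm]
      simp
    rw [hz, norm_zero]
    positivity
  rcases eq_or_lt_of_le hB0 with h | hBpos
  · have hz : (∑ m ∈ Icc 1 N, ∑ n ∈ Icc 1 N,
        if m ≠ n then a m * (starRingEnd ℂ) (b n) / ((m : ℂ) - (n : ℂ)) else 0) = 0 := by
      refine Finset.sum_eq_zero fun m _ => Finset.sum_eq_zero fun n hn => ?_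
      rw [coefzero b h.symm n hn]
      simp
    rw [hz, norm_zero]
    positivity
  -- main case
  obtain ⟨f, hfc, hPA, key⟩ : ∃ f : ℝ → ℂ, Continuous f ∧
      (∫ x in (0:ℝ)..1, ‖f x‖ ^ 2) = ∑ n ∈ Icc 1 N, ‖a n‖ ^ 2 ∧
      (∑ m ∈ Icc 1 N, ∑ n ∈ Icc 1 N,
          if m ≠ n then a m * (starRingEnd ℂ) (b n) / ((m : ℂ) - (n : ℂ)) else 0)
        = (2 * Real.pi * Complex.I) * ∫ x in (0:ℝ)..1, ((x : ℂ) - 1/2) *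
            (f x * (starRingEnd ℂ) (∑ n ∈ Icc 1 N, b n * ee n x)) :=
    ⟨fun x => ∑ m ∈ Icc 1 N, a m * ee m x,
      continuous_finset_sum _ fun m _ => continuous_const.mul (ee_cont _),
      parseval N a, main_id N a b⟩
  obtain ⟨g, hgc, hPB, key⟩ : ∃ g : ℝ → ℂ, Continuous g ∧
      (∫ x in (0:ℝ)..1, ‖g x‖ ^ 2) = ∑ n ∈ Icc 1 N, ‖b n‖ ^ 2 ∧
      (∑ m ∈ Icc 1 N, ∑ n ∈ Icc 1 N,
          if m ≠ n then a m * (starRingEnd ℂ) (b n) / ((m : ℂ) - (n : ℂ)) else 0)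
        = (2 * Real.pi * Complex.I) * ∫ x in (0:ℝ)..1, ((x : ℂ) - 1/2) *
            (f x * (starRingEnd ℂ) (g x)) :=
    ⟨fun x => ∑ n ∈ Icc 1 N, b n * ee n x,
      continuous_finset_sum _ fun n _ => continuous_const.mul (ee_cont _),
      parseval N b, key⟩
  set A := ∑ n ∈ Icc 1 N, ‖a n‖ ^ 2 with hA
  set B := ∑ n ∈ Icc 1 N, ‖b n‖ ^ 2 with hB
  clear_value A B
  clear hA hB coefzero hA0 hB0
  set t := Real.sqrt (B / A) with ht
  have htpos : 0 < t := Real.sqrt_pos.mpr (div_pos hBpos hApos)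
  have e1 : t = Real.sqrt B / Real.sqrt A := by rw [ht, Real.sqrt_div hBpos.le]
  clear_value t
  clear ht
  rw [key, norm_mul]
  have h2pi : ‖(2 * (Real.pi : ℂ) * Complex.I : ℂ)‖ = 2 * Real.pi := by
    simp [norm_mul, Complex.norm_real, abs_of_pos Real.pi_pos]
  rw [h2pi]
  -- pointwise bound
  have hpt : ∀ x ∈ Set.Icc (0:ℝ) 1,
      ‖((x : ℂ) - 1/2) * (f x * (starRingEnd ℂ) (g x))‖
        ≤ (t * ‖f x‖ ^ 2 + ‖g x‖ ^ 2 / t) / 4 := by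
    intro x hx
    rw [norm_mul, norm_mul, RCLike.norm_conj]
    have h1 : ‖((x : ℂ) - 1/2)‖ ≤ 1/2 := by
      rw [show ((x : ℂ) - 1/2) = ((x - 1/2 : ℝ) : ℂ) by push_cast; ring, Complex.norm_real]
      rw [Real.norm_eq_abs, abs_le]; constructor <;> [linarith [hx.1]; linarith [hx.2]]
    have h2 : ‖f x‖ * ‖g x‖ ≤ (t * ‖f x‖ ^ 2 + ‖g x‖ ^ 2 / t) / 2 := by
      rw [le_div_iff₀ (by norm_num : (0:ℝ) < 2), ← sub_nonneg]
      have hid : t * ‖f x‖ ^ 2 + ‖g x‖ ^ 2 / t - ‖f x‖ * ‖g x‖ * 2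
          = (t * ‖f x‖ - ‖g x‖) ^ 2 / t := by
        field_simp
        ring
      rw [hid]
      positivity
    calc ‖((x : ℂ) - 1/2)‖ * (‖f x‖ * ‖g x‖)
        ≤ (1/2) * ((t * ‖f x‖ ^ 2 + ‖g x‖ ^ 2 / t) / 2) := by
          apply mul_le_mul h1 h2 (by positivity) (by norm_num)
      _ = (t * ‖f x‖ ^ 2 + ‖g x‖ ^ 2 / t) / 4 := by ring
  have hintval : (∫ x in (0:ℝ)..1, (t * ‖f x‖ ^ 2 + ‖g x‖ ^ 2 / t) / 4)
      = (t * A + B / t) / 4 := by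
    rw [intervalIntegral.integral_div, intervalIntegral.integral_add
        ((show Continuous fun x => t * ‖f x‖ ^ 2 from continuous_const.mul ((hfc.norm).pow 2)).intervalIntegrable 0 1)
        ((show Continuous fun x => ‖g x‖ ^ 2 / t from ((hgc.norm).pow 2).div_const t).intervalIntegrable 0 1),
      intervalIntegral.integral_const_mul, intervalIntegral.integral_div,
      hPA, hPB]
  have hbound : ‖∫ x in (0:ℝ)..1, ((x : ℂ) - 1/2) * (f x * (starRingEnd ℂ) (g x))‖
      ≤ (t * A + B / t) / 4 := by
    calc ‖∫ x in (0:ℝ)..1, ((x : ℂ) - 1/2) * (f x * (starRingEnd ℂ) (g x))‖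
        ≤ ∫ x in (0:ℝ)..1, ‖((x : ℂ) - 1/2) * (f x * (starRingEnd ℂ) (g x))‖ :=
          intervalIntegral.norm_integral_le_integral_norm (by norm_num)
      _ ≤ ∫ x in (0:ℝ)..1, (t * ‖f x‖ ^ 2 + ‖g x‖ ^ 2 / t) / 4 := by
          apply intervalIntegral.integral_mono_on (by norm_num)
          · exact (((Complex.continuous_ofReal.sub continuous_const).mul
              (hfc.mul (Complex.continuous_conj.comp hgc))).norm).intervalIntegrable 0 1
          · exact ((((continuous_const.mul ((hfc.norm).pow 2)).add
              (((hgc.norm).pow 2).div_const t))).div_const 4).intervalIntegrable 0 1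
          · exact hpt
      _ = (t * A + B / t) / 4 := hintval
  have h1 : t * A = Real.sqrt A * Real.sqrt B := by
    rw [e1, div_mul_eq_mul_div,
      show Real.sqrt B * A / Real.sqrt A = Real.sqrt B * (A / Real.sqrt A) by ring,
      Real.div_sqrt, mul_comm]
  have h2 : B / t = Real.sqrt A * Real.sqrt B := by
    rw [e1, div_div_eq_mul_div,
      show B * Real.sqrt A / Real.sqrt B = Real.sqrt A * (B / Real.sqrt B) by ring,
      Real.div_sqrt]
  have hts : (t * A + B / t) / 2 = Real.sqrt A * Real.sqrt B := by
    rw [h1, h2]; ring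
  calc (2 * Real.pi) * ‖∫ x in (0:ℝ)..1, ((x : ℂ) - 1/2) * (f x * (starRingEnd ℂ) (g x))‖
      ≤ (2 * Real.pi) * ((t * A + B / t) / 4) :=
        mul_le_mul_of_nonneg_left hbound (by positivity)
    _ = Real.pi * ((t * A + B / t) / 2) := by ring
    _ = Real.pi * (Real.sqrt A * Real.sqrt B) := by rw [hts]
    _ = Real.pi * A ^ ((1:ℝ)/2) * B ^ ((1:ℝ)/2) := by
        rw [Real.sqrt_eq_rpow, Real.sqrt_eq_rpow]; ring
end

section
/- Let f be holomorphic on an open neighborhood of the closed unit disc |z| ≤ 1. Then for every real y, PV ∫_{0}^{2π} f(e^{ix}) / (1 − e^{i(y−x)}) dx = π f(e^{iy}), where PV denotes the Cauchy principal value at the singularity x = y (mod 2π). -/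
open Complex MeasureTheory Filter Topology

lemma pv_exp_ne_one (y x : ℝ) (h1 : y < x) (h2 : x < y + 2*Real.pi) :
    Complex.exp (Complex.I*((y:ℂ)-(x:ℂ))) ≠ 1 := by
  intro h
  rw [Complex.exp_eq_one_iff] at h
  obtain ⟨n, hn⟩ := h
  have h2' : ((y - x : ℝ) : ℂ) = ((n * (2 * Real.pi) : ℝ) : ℂ) := by
    apply mul_left_cancel₀ Complex.I_ne_zero
    push_cast
    linear_combination hn
  have h3 : y - x = n * (2 * Real.pi) := by exact_mod_cast h2'
  have hπ := Real.pi_pos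
  have hn0 : (n : ℝ) < 0 := by nlinarith
  have hn1 : (-1 : ℝ) < n := by nlinarith
  have e1 : (n : ℤ) < 0 := by exact_mod_cast hn0
  have e2 : (-1 : ℤ) < n := by exact_mod_cast hn1
  omega

lemma pv_mem_ball (x : ℝ) : Complex.exp (Complex.I * x) ∈ Metric.closedBall (0:ℂ) 1 := by
  simp [Metric.mem_closedBall, Complex.dist_eq, Complex.norm_exp]

lemma pv_exp_per (x : ℝ) : Complex.exp (Complex.I * ((x + 2*Real.pi : ℝ) : ℂ))
    = Complex.exp (Complex.I * x) := by
  rw [show Complex.I * ((x + 2*Real.pi : ℝ):ℂ) = Complex.I*x + 2*Real.pi*Complex.I by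
    push_cast; ring, Complex.exp_add, Complex.exp_two_pi_mul_I, mul_one]

lemma pv_kernel_integral (y δ : ℝ) (h0 : 0 < δ) (hπ : δ < Real.pi) :
    ∫ x in (y+δ)..(y+2*Real.pi-δ), (1 - Complex.exp (Complex.I * ((y:ℂ)-(x:ℂ))))⁻¹
      = (Real.pi : ℂ) - δ := by
  have hpi := Real.pi_pos
  set K : ℝ → ℂ := fun x => (1 - Complex.exp (Complex.I * ((y:ℂ)-(x:ℂ))))⁻¹ with hK
  have hle : y + δ ≤ y + 2*Real.pi - δ := by linarith
  have hmem : ∀ x ∈ Set.uIcc (y+δ) (y+2*Real.pi-δ), y < x ∧ x < y + 2*Real.pi := by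
    intro x hx
    rw [Set.uIcc_of_le hle] at hx
    exact ⟨by linarith [hx.1], by linarith [hx.2]⟩
  have hne : ∀ x ∈ Set.uIcc (y+δ) (y+2*Real.pi-δ),
      (1 : ℂ) - Complex.exp (Complex.I * ((y:ℂ)-(x:ℂ))) ≠ 0 := by
    intro x hx
    have := pv_exp_ne_one y x (hmem x hx).1 (hmem x hx).2
    exact sub_ne_zero.mpr (fun h => this h.symm)
  have hKcont : ContinuousOn K (Set.uIcc (y+δ) (y+2*Real.pi-δ)) := by
    apply ContinuousOn.inv₀
    · fun_prop
    · exact hne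
  have hKint : IntervalIntegrable K volume (y+δ) (y+2*Real.pi-δ) :=
    hKcont.intervalIntegrable
  have hrefl : (∫ x in (y+δ)..(y+2*Real.pi-δ), K ((2*y+2*Real.pi) - x))
      = ∫ x in (y+δ)..(y+2*Real.pi-δ), K x := by
    rw [intervalIntegral.integral_comp_sub_left K (2*y+2*Real.pi)]
    ring_nf
  have hpoint : ∀ x ∈ Set.uIcc (y+δ) (y+2*Real.pi-δ),
      K ((2*y+2*Real.pi) - x) = 1 - K x := by
    intro x hx
    have h1 := hne x hx
    set a : ℂ := Complex.exp (Complex.I * ((y:ℂ)-(x:ℂ))) with ha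
    have ha0 : a ≠ 0 := Complex.exp_ne_zero _
    have hexp : Complex.exp (Complex.I * ((y:ℂ)-((2*y+2*Real.pi - x : ℝ):ℂ))) = a⁻¹ := by
      apply eq_inv_of_mul_eq_one_left
      rw [ha, ← Complex.exp_add]
      have h3 : Complex.I * ((y:ℂ) - ((2*y+2*Real.pi - x : ℝ):ℂ)) + Complex.I * ((y:ℂ) - (x:ℂ))
          = -(2*(Real.pi:ℂ)*Complex.I) := by push_cast; ring
      rw [h3, Complex.exp_neg, Complex.exp_two_pi_mul_I, inv_one]
    show (1 - Complex.exp (Complex.I * ((y:ℂ)-((2*y+2*Real.pi - x : ℝ):ℂ))))⁻¹ = 1 - (1-a)⁻¹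
    rw [hexp]
    apply inv_eq_of_mul_eq_one_right
    have hc : a * a⁻¹ = 1 := mul_inv_cancel₀ ha0
    have hb2 : (1 - a) * (1-a)⁻¹ = 1 := mul_inv_cancel₀ h1
    linear_combination a⁻¹ * hb2 + (1-a)⁻¹ * hc
  have key : (∫ x in (y+δ)..(y+2*Real.pi-δ), K x)
      = ∫ x in (y+δ)..(y+2*Real.pi-δ), ((1:ℂ) - K x) := by
    rw [← hrefl]; exact intervalIntegral.integral_congr hpoint
  rw [intervalIntegral.integral_sub intervalIntegrable_const hKint,
    intervalIntegral.integral_const] at key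
  have hs : ((y+2*Real.pi-δ) - (y+δ)) • (1:ℂ) = ((2*Real.pi - 2*δ : ℝ) : ℂ) := by
    rw [Complex.real_smul]; push_cast; ring
  rw [hs] at key
  push_cast at key ⊢
  linear_combination key / 2

lemma pv_cauchy (f : ℂ → ℂ) (U : Set ℂ) (hUopen : IsOpen U)
    (hUdisc : Metric.closedBall (0 : ℂ) 1 ⊆ U) (hhol : DifferentiableOn ℂ f U) (y : ℝ) :
    (∫ x in y..(y + 2*Real.pi),
      dslope f (Complex.exp (Complex.I * y)) (Complex.exp (Complex.I * x))
        * Complex.exp (Complex.I * x)) = 0 := by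
  set w : ℂ := Complex.exp (Complex.I * y) with hw
  have hwU : U ∈ 𝓝 w := hUopen.mem_nhds (hUdisc (pv_mem_ball y))
  have hd : DifferentiableOn ℂ (dslope f w) U := (differentiableOn_dslope hwU).mpr hhol
  have hz : (∮ z in C((0:ℂ), 1), dslope f w z) = 0 :=
    circleIntegral_eq_zero_of_differentiable_on_off_countable zero_le_one Set.countable_empty
      ((hd.continuousOn).mono hUdisc)
      (fun z hzz => hd.differentiableAt
        (hUopen.mem_nhds (hUdisc (Metric.ball_subset_closedBall hzz.1))))
  have hper : Function.Periodic
      (fun x : ℝ => dslope f w (Complex.exp (Complex.I * x)) * Complex.exp (Complex.I * x))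
      (2*Real.pi) := by
    intro x
    simp only [pv_exp_per x]
  rw [hper.intervalIntegral_add_eq y 0, zero_add]
  have h2 : (∫ θ in (0:ℝ)..2*Real.pi,
      Complex.I * (dslope f w (Complex.exp (Complex.I*θ)) * Complex.exp (Complex.I*θ))) = 0 := by
    rw [← hz]
    unfold circleIntegral
    apply intervalIntegral.integral_congr
    intro θ _
    simp only [deriv_circleMap, circleMap, ofReal_one, one_mul, zero_add, smul_eq_mul]
    rw [show ((θ:ℂ) * Complex.I) = Complex.I * θ from mul_comm _ _]
    ring
  rw [intervalIntegral.integral_const_mul] at h2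
  exact (mul_eq_zero.mp h2).resolve_left Complex.I_ne_zero

/-- **Principal-value reproducing property of the Cauchy kernel on the unit circle**
(Sec. 5 of the paper). If `f` is holomorphic on an open neighbourhood of the closed unit
disc, then for every real `y`,
`PV ∫_{0}^{2π} f(e^{ix})/(1 - e^{i(y-x)}) dx = π f(e^{iy})`, the principal value being the
limit, as `δ → 0⁺`, of the integral over a full period with the symmetric interval of radius
`δ` about the singular point `x ≡ y (mod 2π)` removed; by `2π`-periodicity of the integrand
this is the limit of `∫_{y+δ}^{y+2π-δ}`. -/
theorem circle_principal_value_reproduces (f : ℂ → ℂ) (U : Set ℂ) (hUopen : IsOpen U)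
    (hUdisc : Metric.closedBall (0 : ℂ) 1 ⊆ U) (hhol : DifferentiableOn ℂ f U) (y : ℝ) :
    Tendsto
      (fun δ : ℝ =>
        ∫ x in (y + δ)..(y + 2 * Real.pi - δ),
          f (Complex.exp (Complex.I * x)) / (1 - Complex.exp (Complex.I * (y - x))))
      (𝓝[>] 0) (𝓝 (Real.pi * f (Complex.exp (Complex.I * y)))) := by
  have hpi := Real.pi_pos
  set w : ℂ := Complex.exp (Complex.I * y) with hw
  set G : ℝ → ℂ := fun x => dslope f w (Complex.exp (Complex.I * x)) * Complex.exp (Complex.I * x)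
    with hG
  have hwU : U ∈ 𝓝 w := hUopen.mem_nhds (hUdisc (pv_mem_ball y))
  have hdsl : DifferentiableOn ℂ (dslope f w) U := (differentiableOn_dslope hwU).mpr hhol
  have hGcont : Continuous G := by
    apply Continuous.mul
    · exact (hdsl.continuousOn).comp_continuous (by fun_prop) (fun x => hUdisc (pv_mem_ball x))
    · fun_prop
  set H : ℝ → ℂ := fun t => ∫ x in y..t, G x with hH
  have hHcont : Continuous H :=
    intervalIntegral.continuous_primitive (fun a b => hGcont.intervalIntegrable a b) y
  have hH2pi : H (y + 2*Real.pi) = 0 := pv_cauchy f U hUopen hUdisc hhol y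
  have hHy : H y = 0 := intervalIntegral.integral_same
  have key : ∀ δ ∈ Set.Ioo (0:ℝ) Real.pi,
      (∫ x in (y+δ)..(y+2*Real.pi-δ),
        f (Complex.exp (Complex.I*x)) / (1 - Complex.exp (Complex.I*((y:ℂ)-(x:ℂ)))))
        = (H (y+2*Real.pi-δ) - H (y+δ)) + f w * ((Real.pi:ℂ) - δ) := by
    intro δ hδ
    obtain ⟨h0, hπ⟩ := hδ
    have hle : y + δ ≤ y + 2*Real.pi - δ := by linarith
    set K : ℝ → ℂ := fun x => (1 - Complex.exp (Complex.I * ((y:ℂ)-(x:ℂ))))⁻¹ with hK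
    have hmemx : ∀ x ∈ Set.uIcc (y+δ) (y+2*Real.pi-δ),
        (1:ℂ) - Complex.exp (Complex.I*((y:ℂ)-(x:ℂ))) ≠ 0 := by
      intro x hx
      rw [Set.uIcc_of_le hle] at hx
      exact sub_ne_zero.mpr fun h =>
        pv_exp_ne_one y x (by linarith [hx.1]) (by linarith [hx.2]) h.symm
    have hdecomp : Set.EqOn
        (fun x : ℝ => f (Complex.exp (Complex.I*x)) / (1 - Complex.exp (Complex.I*((y:ℂ)-(x:ℂ)))))
        (fun x : ℝ => G x + f w * K x) (Set.uIcc (y+δ) (y+2*Real.pi-δ)) := by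
      intro x hx
      have hx' := hx
      rw [Set.uIcc_of_le hle] at hx'
      have h1 : y < x := by linarith [hx'.1]
      have h2 : x < y + 2*Real.pi := by linarith [hx'.2]
      set z : ℂ := Complex.exp (Complex.I * x) with hz
      have hz0 : z ≠ 0 := Complex.exp_ne_zero _
      have hrel : Complex.exp (Complex.I * ((y:ℂ)-(x:ℂ))) = w * z⁻¹ := by
        rw [hw, hz, ← Complex.exp_neg, ← Complex.exp_add]; congr 1; ring
      have hne1 : Complex.exp (Complex.I * ((y:ℂ)-(x:ℂ))) ≠ 1 := pv_exp_ne_one y x h1 h2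
      have hzw : z ≠ w := by
        intro h
        exact hne1 (by rw [hrel, ← h, mul_inv_cancel₀ hz0])
      have hsub : z - w ≠ 0 := sub_ne_zero.mpr hzw
      have hinv : (z - w) * (z - w)⁻¹ = 1 := mul_inv_cancel₀ hsub
      have hzinv : z * z⁻¹ = 1 := mul_inv_cancel₀ hz0
      have hden : (1:ℂ) - w * z⁻¹ ≠ 0 := by
        have hfac : (1:ℂ) - w * z⁻¹ = (z - w) * z⁻¹ := by
          field_simp
        rw [hfac]
        exact mul_ne_zero hsub (inv_ne_zero hz0)
      show f z / (1 - Complex.exp (Complex.I * ((y:ℂ)-(x:ℂ))))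
          = dslope f w z * z + f w * (1 - Complex.exp (Complex.I * ((y:ℂ)-(x:ℂ))))⁻¹
      have hfac : (1:ℂ) - w * z⁻¹ = (z - w) * z⁻¹ := by rw [sub_mul, hzinv]
      rw [hrel, dslope_of_ne f hzw, slope_def_field, hfac, div_eq_mul_inv, div_eq_mul_inv,
        mul_inv, inv_inv]
      ring
    rw [intervalIntegral.integral_congr hdecomp]
    have hKint : IntervalIntegrable K volume (y+δ) (y+2*Real.pi-δ) :=
      (ContinuousOn.inv₀ (by fun_prop) hmemx).intervalIntegrable
    rw [intervalIntegral.integral_add (hGcont.intervalIntegrable _ _)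
      (hKint.const_mul (f w)), intervalIntegral.integral_const_mul,
      pv_kernel_integral y δ h0 hπ]
    congr 1
    exact (intervalIntegral.integral_interval_sub_left (hGcont.intervalIntegrable y _)
      (hGcont.intervalIntegrable y _)).symm
  have hev : (fun δ : ℝ =>
        ∫ x in (y + δ)..(y + 2 * Real.pi - δ),
          f (Complex.exp (Complex.I * x)) / (1 - Complex.exp (Complex.I * (y - x))))
      =ᶠ[𝓝[>] (0:ℝ)]
      (fun δ : ℝ => (H (y+2*Real.pi-δ) - H (y+δ)) + f w * ((Real.pi:ℂ) - δ)) := by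
    filter_upwards [Ioo_mem_nhdsGT_of_mem (Set.mem_Ico.mpr ⟨le_refl (0:ℝ), hpi⟩)] with δ hδ
    exact key δ hδ
  apply Tendsto.congr' hev.symm
  have hc : Continuous (fun δ : ℝ =>
      (H (y+2*Real.pi-δ) - H (y+δ)) + f w * ((Real.pi:ℂ) - (δ:ℂ))) := by
    fun_prop
  have heval : H (y + 2*Real.pi - 0) - H (y + 0) + f w * ((Real.pi:ℂ) - ((0:ℝ):ℂ))
      = (Real.pi:ℂ) * f w := by
    rw [sub_zero, add_zero, hH2pi, hHy]
    push_cast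
    ring
  rw [← heval]
  exact (hc.tendsto 0).mono_left nhdsWithin_le_nhds
end
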